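/- Let D be a directed graph (of arbitrary cardinality) whose longest directed path has length k, where 0 ≤ k < ∞ (length counts edges). Then the underlying undirected graph of D has chromatic number at most k+1. -/

import Mathlib

open Relation

section Aux

variable {V : Type*}

private def toRel (s : Set (V × V)) : V → V → Prop := fun a b => (a, b) ∈ s

private def Acyc (s : Set (V × V)) : Prop := ∀ v : V, ¬ TransGen (toRel s) v v

/-- walks of length `n` starting at `v` inside `s` -/
private def wk (s : Set (V × V)) (v : V) (n : ℕ) : Prop :=
  ∃ l : List V, List.Chain (toRel s) v l ∧ l.length = n

private lemma chain'_transGen {R : V → V → Prop} {l : List V} (h : List.Chain' R l) :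
    ∀ (i j : ℕ) (hij : i < j) (hj : j < l.length),
      TransGen R (l.get ⟨i, by omega⟩) (l.get ⟨j, hj⟩) := by
  intro i j hij
  induction j with
  | zero => omega
  | succ j ih =>
    intro hj
    have hstep : R (l.get ⟨j, by omega⟩) (l.get ⟨j + 1, hj⟩) :=
      List.isChain_iff_getElem.mp h j (by omega)
    rcases Nat.lt_or_ge i j with hlt | hge
    · exact (ih hlt (by omega)).tail hstep
    · have : i = j := by omega
      subst this
      exact TransGen.single hstep

private lemma transGen_insert {s : Set (V × V)} {u v a b : V}
    (h : TransGen (toRel (insert (u, v) s)) a b) :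
    TransGen (toRel s) a b ∨
      (ReflTransGen (toRel s) a u ∧ ReflTransGen (toRel s) v b) := by
  induction h with
  | single hab =>
    rcases Set.mem_insert_iff.mp hab with h' | h'
    · obtain ⟨rfl, rfl⟩ := Prod.mk.injEq .. ▸ h'
      exact Or.inr ⟨ReflTransGen.refl, ReflTransGen.refl⟩
    · exact Or.inl (TransGen.single h')
  | tail _ hbc ih =>
    rename_i b' c _
    rcases Set.mem_insert_iff.mp hbc with h' | h'
    · obtain ⟨rfl, rfl⟩ := Prod.mk.injEq .. ▸ h'
      rcases ih with h₁ | ⟨h₁, _⟩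
      · exact Or.inr ⟨h₁.to_reflTransGen, ReflTransGen.refl⟩
      · exact Or.inr ⟨h₁, ReflTransGen.refl⟩
    · rcases ih with h₁ | ⟨h₁, h₂⟩
      · exact Or.inl (h₁.tail h')
      · exact Or.inr ⟨h₁, h₂.tail h'⟩

private lemma transGen_sUnion {c : Set (Set (V × V))} (hc : IsChain (· ⊆ ·) c) {a b : V}
    (h : TransGen (toRel (⋃₀ c)) a b) : ∃ s ∈ c, TransGen (toRel s) a b := by
  induction h with
  | single hab =>
    obtain ⟨s, hs, hmem⟩ := hab
    exact ⟨s, hs, TransGen.single hmem⟩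
  | tail _ hbc ih =>
    obtain ⟨s₁, hs₁, h₁⟩ := ih
    obtain ⟨s₂, hs₂, hmem⟩ := hbc
    rcases hc.total hs₁ hs₂ with hsub | hsub
    · exact ⟨s₂, hs₂, (TransGen.mono (fun x y hxy => hsub hxy) _ _ h₁).tail hmem⟩
    · exact ⟨s₁, hs₁, h₁.tail (hsub hmem)⟩

end Aux

/-- Gallai–Hasse–Roy–Vitaver: if the longest directed path of a (not necessarily
countable) digraph `D` has length `k` (`0 ≤ k < ∞`), then the underlying
undirected graph of `D` is `(k+1)`-colourable, i.e. has chromatic number at most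
`k + 1`. -/
theorem stmt2 {V : Type*} (E : V → V → Prop) (k : ℕ)
    (hex : ∃ v : Fin (k + 1) → V, Function.Injective v ∧
      ∀ i : Fin k, E (v i.castSucc) (v i.succ))
    (hbdd : ∀ (m : ℕ) (v : Fin (m + 1) → V), Function.Injective v →
      (∀ i : Fin m, E (v i.castSucc) (v i.succ)) → m ≤ k) :
    (SimpleGraph.fromRel E).Colorable (k + 1) := by
  classical
  set S : Set (Set (V × V)) := {s | s ⊆ {p | E p.1 p.2} ∧ Acyc s} with hS
  -- Zorn's lemma: maximal acyclic subrelation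
  obtain ⟨s, hsmax⟩ : ∃ m, Maximal (· ∈ S) m := by
    refine zorn_subset S fun c hcS hc => ⟨⋃₀ c, ⟨?_, ?_⟩, fun t ht => Set.subset_sUnion_of_mem ht⟩
    · exact Set.sUnion_subset fun t ht => (hcS ht).1
    · intro v hv
      obtain ⟨t, ht, h⟩ := transGen_sUnion hc hv
      exact (hcS ht).2 v h
  obtain ⟨⟨hsE, hsA⟩, hmax⟩ := hsmax
  -- any walk in `s` has length at most `k`
  have hwk_le : ∀ v n, wk s v n → n ≤ k := by
    rintro v n ⟨l, hchain, hlen⟩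
    have hchain' : List.Chain' (toRel s) (v :: l) := hchain
    have hlen' : (v :: l).length = n + 1 := by simp [hlen]
    have hnodup : (v :: l).Nodup := by
      rw [List.nodup_iff_injective_get]
      rintro ⟨i, hi⟩ ⟨j, hj⟩ hij
      rcases lt_trichotomy i j with h | h | h
      · exact absurd (hij ▸ chain'_transGen hchain' i j h hj) (hsA _)
      · simp [h]
      · exact absurd (hij ▸ chain'_transGen hchain' j i h hi) (hsA _)
    set p : Fin (n + 1) → V := fun i => (v :: l).get (Fin.cast hlen'.symm i) with hp
    have hpinj : Function.Injective p := by
      intro a b hab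
      have := List.nodup_iff_injective_get.mp hnodup hab
      simpa [Fin.ext_iff] using Fin.ext_iff.mp this
    refine hbdd n p hpinj fun i => ?_
    have := List.isChain_iff_getElem.mp hchain' i (by simp [hlen'])
    exact hsE this
  -- the height function
  set ht : V → ℕ := fun v => sSup {n | wk s v n} with hht
  have hne : ∀ v, {n | wk s v n}.Nonempty := fun v => ⟨0, [], List.Chain.nil, rfl⟩
  have hbd : ∀ v, BddAbove {n | wk s v n} := fun v => ⟨k, fun n hn => hwk_le v n hn⟩
  have ht_mem : ∀ v, wk s v (ht v) := fun v => Nat.sSup_mem (hne v) (hbd v)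
  have ht_le : ∀ v, ht v ≤ k := fun v => hwk_le v _ (ht_mem v)
  have ht_step : ∀ u v, (u, v) ∈ s → ht v < ht u := by
    intro u v huv
    obtain ⟨l, hchain, hlen⟩ := ht_mem v
    have : wk s u (ht v + 1) := ⟨v :: l, List.Chain.cons huv hchain, by simp [hlen]⟩
    exact Nat.lt_of_succ_le (le_csSup (hbd u) this)
  have ht_trans : ∀ u v, TransGen (toRel s) v u → ht u < ht v := by
    intro u v h
    induction h using TransGen.head_induction_on with
    | single h => exact ht_step _ _ h
    | head h _ ih => exact lt_trans ih (ht_step _ _ h)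
  -- maximality: every edge of E is in s or reversed by a path in s
  have hkey : ∀ u v, u ≠ v → E u v → (u, v) ∈ s ∨ TransGen (toRel s) v u := by
    intro u v hne' hE
    by_contra hcon
    push_neg at hcon
    obtain ⟨h₁, h₂⟩ := hcon
    have hins : insert (u, v) s ∈ S := by
      constructor
      · exact Set.insert_subset hE hsE
      · intro w hw
        rcases transGen_insert hw with h | ⟨hwu, hvw⟩
        · exact hsA w h
        · have : ReflTransGen (toRel s) v u := hvw.trans hwu
          rcases reflTransGen_iff_eq_or_transGen.mp this with h | h
          · exact hne' h
          · exact h₂ h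
    have := hmax hins (Set.subset_insert _ _)
    exact h₁ (this (Set.mem_insert _ _))
  -- edges get distinct heights
  have hdist : ∀ u v, u ≠ v → E u v → ht u ≠ ht v := by
    intro u v hne' hE
    rcases hkey u v hne' hE with h | h
    · exact (ht_step u v h).ne'
    · exact (ht_trans u v h).ne
  refine ⟨SimpleGraph.Coloring.mk (fun v => ⟨ht v, Nat.lt_succ_of_le (ht_le v)⟩) ?_⟩
  intro u v huv
  obtain ⟨hne', hE⟩ := huv
  simp only [Ne, Fin.mk.injEq]
  rcases hE with h | h
  · exact hdist u v hne' h
  · exact fun h' => hdist v u (Ne.symm hne') h h'.symm
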